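/- Let ε ∈ [0,1), and let x, y ≥ 0 be reals with |x − y| ≤ 1. Then (1+ε)^x (1−ε)^y ≤ 1 + ε(x − y). -/

import Mathlib

/-- For ε ∈ [0,1) and x, y ≥ 0 with |x−y| ≤ 1: (1+ε)^x (1−ε)^y ≤ 1 + ε(x−y). -/
theorem rpow_mul_rpow_le (ε : ℝ) (hε0 : 0 ≤ ε) (hε1 : ε < 1)
    (x y : ℝ) (hx : 0 ≤ x) (hy : 0 ≤ y) (hxy : |x - y| ≤ 1) :
    (1 + ε) ^ x * (1 - ε) ^ y ≤ 1 + ε * (x - y) := by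
  have hp : (0:ℝ) < 1 + ε := by linarith
  have hm : (0:ℝ) < 1 - ε := by linarith
  have hprod : (1 + ε) * (1 - ε) ≤ 1 := by nlinarith
  rcases le_or_gt y x with h | h
  · have hd0 : 0 ≤ x - y := by linarith
    have hd1 : x - y ≤ 1 := by rwa [abs_of_nonneg hd0] at hxy
    have hsplit : (1 + ε) ^ x = (1 + ε) ^ (x - y) * (1 + ε) ^ y := by
      rw [← Real.rpow_add hp]; ring_nf
    rw [hsplit, mul_assoc, ← Real.mul_rpow hp.le hm.le]
    calc (1 + ε) ^ (x - y) * ((1 + ε) * (1 - ε)) ^ y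
        ≤ (1 + ε) ^ (x - y) * 1 := by
          refine mul_le_mul_of_nonneg_left ?_ (Real.rpow_nonneg hp.le _)
          exact Real.rpow_le_one (by positivity) hprod hy
      _ = (1 + ε) ^ (x - y) := mul_one _
      _ ≤ 1 + (x - y) * ε := rpow_one_add_le_one_add_mul_self (by linarith) hd0 hd1
      _ = 1 + ε * (x - y) := by ring
  · have hd0 : 0 ≤ y - x := by linarith
    have hd1 : y - x ≤ 1 := by
      rw [abs_sub_comm, abs_of_nonneg hd0] at hxy; exact hxy
    have hsplit : (1 - ε) ^ y = (1 - ε) ^ (y - x) * (1 - ε) ^ x := by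
      rw [← Real.rpow_add hm]; ring_nf
    rw [hsplit, ← mul_assoc, mul_comm (((1:ℝ)+ε)^x), mul_assoc, ← Real.mul_rpow hp.le hm.le]
    calc (1 - ε) ^ (y - x) * ((1 + ε) * (1 - ε)) ^ x
        ≤ (1 - ε) ^ (y - x) * 1 := by
          refine mul_le_mul_of_nonneg_left ?_ (Real.rpow_nonneg hm.le _)
          exact Real.rpow_le_one (by positivity) hprod hx
      _ = (1 - ε) ^ (y - x) := mul_one _
      _ ≤ 1 + (y - x) * (-ε) := by
          have := rpow_one_add_le_one_add_mul_self (s := -ε) (by linarith) hd0 hd1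
          simpa [sub_eq_add_neg] using this
      _ = 1 + ε * (x - y) := by ring
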